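/- With P-probability 1 over sequences sampled from P: for every Q ∈ ℳ with limsup_{t→∞} w(Q | x_{<t}) > 0, the conditional measures of Q merge with those of P in total variation, i.e. lim_{t→∞} d(P, Q | x_{<t}) = 0. -/

import Mathlib

set_option linter.unusedVariables false
set_option linter.unusedSectionVars false
set_option maxHeartbeats 1000000


open MeasureTheory Filter Topology

/-- The cylinder set of infinite sequences agreeing with `x` on the first `t` coordinates,
i.e. the set of sequences beginning with the prefix `x_{<t}`. -/
def cyl {X : Type*} (x : ℕ → X) (t : ℕ) : Set (ℕ → X) := {y | ∀ i < t, y i = x i}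

/-- `Q(x_{<t})`: the `Q`-measure of the cylinder set of sequences beginning with `x_{<t}`,
as a real number. -/
noncomputable def prefProb {X : Type*} [MeasurableSpace X]
    (Q : Measure (ℕ → X)) (x : ℕ → X) (t : ℕ) : ℝ :=
  (Q (cyl x t)).toReal

/-- The posterior weight `w(Q i | x_{<t}) = w(Q i)·(Q i)(x_{<t}) / ∑_{j} w(Q j)·(Q j)(x_{<t})`. -/
noncomputable def post {X ι : Type*} [MeasurableSpace X]
    (w : ι → ℝ) (Q : ι → Measure (ℕ → X)) (i : ι) (x : ℕ → X) (t : ℕ) : ℝ :=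
  w i * prefProb (Q i) x t / ∑' j, w j * prefProb (Q j) x t

/-- `Q(ℰ | x_{<t})`: the conditional probability, given the prefix `x_{<t}`, that the next `k`
symbols form a string belonging to `ℰ ⊆ 𝒳^k`. -/
noncomputable def condProb {X : Type*} [MeasurableSpace X]
    (Q : Measure (ℕ → X)) (x : ℕ → X) (t k : ℕ) (E : Set (Fin k → X)) : ℝ :=
  (Q {y | y ∈ cyl x t ∧ (fun j : Fin k => y (t + j)) ∈ E}).toReal / prefProb Q x t

/-- The `k`-step variation distance
`d_k(P, Q | x_{<t}) = max_{ℰ ⊆ 𝒳^k} |P(ℰ | x_{<t}) − Q(ℰ | x_{<t})|`. -/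
noncomputable def dk {X : Type*} [MeasurableSpace X]
    (P Q : Measure (ℕ → X)) (x : ℕ → X) (t k : ℕ) : ℝ :=
  ⨆ E : Set (Fin k → X), |condProb P x t k E - condProb Q x t k E|

/-- The total variation distance `d(P, Q | x_{<t}) = lim_{k→∞} d_k(P, Q | x_{<t})`; since
`d_k` is non-decreasing in `k` and bounded by 1, the limit equals the supremum over `k`. -/
noncomputable def dTV {X : Type*} [MeasurableSpace X]
    (P Q : Measure (ℕ → X)) (x : ℕ → X) (t : ℕ) : ℝ :=
  ⨆ k : ℕ, dk P Q x t k

/-- Projection onto the first `t` coordinates. -/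
def mproj (X : Type*) (t : ℕ) : (ℕ → X) → (Fin t → X) := fun y j => y j

lemma measurable_mproj {X : Type*} [MeasurableSpace X] (t : ℕ) : Measurable (mproj X t) :=
  measurable_pi_lambda _ fun j => measurable_pi_apply _

lemma measurableSet_fin {X : Type*} [Finite X] [MeasurableSpace X]
    [MeasurableSingletonClass X] {n : ℕ} (E : Set (Fin n → X)) : MeasurableSet E :=
  (Set.to_countable E).measurableSet

lemma cyl_eq {X : Type*} (x : ℕ → X) (t : ℕ) : cyl x t = mproj X t ⁻¹' {mproj X t x} := by
  ext y
  simp only [cyl, Set.mem_setOf_eq, Set.mem_preimage, Set.mem_singleton_iff, funext_iff, mproj]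
  constructor
  · intro h j; exact h j j.2
  · intro h i hi; exact h ⟨i, hi⟩

lemma measurableSet_cyl {X : Type*} [Finite X] [MeasurableSpace X] [MeasurableSingletonClass X]
    (x : ℕ → X) (t : ℕ) : MeasurableSet (cyl x t) := by
  rw [cyl_eq]; exact measurable_mproj t (measurableSet_fin _)

lemma cyl_congr {X : Type*} {x y : ℕ → X} {s t : ℕ} (hy : y ∈ cyl x t) (hst : s ≤ t) :
    cyl y s = cyl x s := by
  ext z
  refine forall₂_congr fun i hi => ?_
  rw [hy i (lt_of_lt_of_le hi hst)]

/-- The coordinate filtration. -/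
def cylFilt (X : Type*) [MeasurableSpace X] :
    Filtration ℕ (inferInstance : MeasurableSpace (ℕ → X)) where
  seq t := MeasurableSpace.comap (mproj X t) inferInstance
  mono' := by
    intro s t hst
    show MeasurableSpace.comap (mproj X s) inferInstance ≤
      MeasurableSpace.comap (mproj X t) inferInstance
    have h : mproj X s = (fun (v : Fin t → X) (j : Fin s) => v ⟨j, lt_of_lt_of_le j.2 hst⟩) ∘
        mproj X t := rfl
    rw [h, ← MeasurableSpace.comap_comp]
    exact MeasurableSpace.comap_mono
      (measurable_pi_lambda _ fun j => measurable_pi_apply _).comap_le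
  le' t := (measurable_mproj t).comap_le

lemma iSup_cylFilt {X : Type*} [MeasurableSpace X] :
    (⨆ t, cylFilt X t) = (inferInstance : MeasurableSpace (ℕ → X)) := by
  refine le_antisymm (iSup_le fun t => (cylFilt X).le t) ?_
  have hpi : (inferInstance : MeasurableSpace (ℕ → X)) =
      ⨆ a : ℕ, MeasurableSpace.comap (fun y : ℕ → X => y a) inferInstance := rfl
  refine le_trans (le_of_eq hpi) (iSup_le fun n => ?_)
  have h : (fun (y : ℕ → X) => y n) =
      (fun (v : Fin (n+1) → X) => v ⟨n, n.lt_succ_self⟩) ∘ mproj X (n+1) := rfl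
  refine le_trans ?_ (le_iSup (fun t => (cylFilt X t : MeasurableSpace (ℕ → X))) (n+1))
  show MeasurableSpace.comap (fun y : ℕ → X => y n) inferInstance ≤
    MeasurableSpace.comap (mproj X (n+1)) inferInstance
  rw [h, ← MeasurableSpace.comap_comp]
  exact MeasurableSpace.comap_mono (measurable_pi_apply _).comap_le

section CondExp

variable {X : Type*} [Fintype X] [Nonempty X] [MeasurableSpace X] [MeasurableSingletonClass X]

/-- Average of `g` over the cylinder of `x` of length `t`. -/
noncomputable def cylAvg (μ : Measure (ℕ → X)) (g : (ℕ → X) → ℝ) (t : ℕ) (x : ℕ → X) : ℝ :=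
  (∫ y in cyl x t, g y ∂μ) / (μ (cyl x t)).toReal

lemma measurable_comp_mproj {t : ℕ} (G : (Fin t → X) → ℝ) :
    Measurable[cylFilt X t] fun y => G (mproj X t y) := fun s hs =>
  ⟨G ⁻¹' s, (Set.to_countable _).measurableSet, rfl⟩

lemma integrable_comp_mproj (μ : Measure (ℕ → X)) [IsFiniteMeasure μ] {t : ℕ}
    (G : (Fin t → X) → ℝ) : Integrable (fun y => G (mproj X t y)) μ := by
  have hm : Measurable fun y => G (mproj X t y) :=
    (measurable_of_finite G).comp (measurable_mproj t)
  refine (integrable_const ((Finset.univ : Finset (Fin t → X)).sup' ⟨mproj X t (Classical.arbitrary _), Finset.mem_univ _⟩ fun v => |G v|)).mono' hm.aestronglyMeasurable ?_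
  refine Eventually.of_forall fun y => ?_
  simpa [Real.norm_eq_abs] using Finset.le_sup' (f := fun v => |G v|) (Finset.mem_univ (mproj X t y))

lemma condexp_cylAvg (μ : Measure (ℕ → X)) [IsProbabilityMeasure μ] {g : (ℕ → X) → ℝ}
    (hg : Integrable g μ) (t : ℕ) :
    (fun x => cylAvg μ g t x) =ᵐ[μ] μ[g | cylFilt X t] := by
  set Gv : (Fin t → X) → ℝ := fun v =>
    (∫ y in mproj X t ⁻¹' {v}, g y ∂μ) / (μ (mproj X t ⁻¹' {v})).toReal with hGv
  have hcand : (fun x => cylAvg μ g t x) = fun x => Gv (mproj X t x) := by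
    funext x; rw [cylAvg, cyl_eq]
  rw [hcand]
  have hm := (cylFilt X).le t
  haveI : SigmaFinite (μ.trim hm) := by
    haveI := isFiniteMeasure_trim (μ := μ) hm
    infer_instance
  refine ae_eq_condExp_of_forall_setIntegral_eq hm hg
    (fun s _ _ => (integrable_comp_mproj μ Gv).integrableOn) ?_
    (StronglyMeasurable.aestronglyMeasurable (measurable_comp_mproj Gv).stronglyMeasurable)
  rintro s ⟨T, -, rfl⟩ -
  have hdecomp : mproj X t ⁻¹' T = ⋃ v ∈ T.toFinite.toFinset, mproj X t ⁻¹' {v} := by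
    ext y; simp [Set.Finite.mem_toFinset]
  have hmeasv : ∀ v ∈ T.toFinite.toFinset, MeasurableSet (mproj X t ⁻¹' ({v} : Set (Fin t → X))) :=
    fun v _ => measurable_mproj t (measurableSet_fin _)
  have hdisj : Set.Pairwise (↑T.toFinite.toFinset) (Function.onFun Disjoint fun v => mproj X t ⁻¹' ({v} : Set (Fin t → X))) := by
    intro a _ b _ hab
    refine Set.disjoint_left.2 fun y hya hyb => hab ?_
    simp only [Set.mem_preimage, Set.mem_singleton_iff] at hya hyb
    rw [← hya, ← hyb]
  rw [hdecomp,
    integral_biUnion_finset T.toFinite.toFinset hmeasv hdisj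
      (fun v _ => (integrable_comp_mproj μ Gv).integrableOn),
    integral_biUnion_finset T.toFinite.toFinset hmeasv hdisj (fun v _ => hg.integrableOn)]
  refine Finset.sum_congr rfl fun v _ => ?_
  have hconst : ∀ y ∈ mproj X t ⁻¹' ({v} : Set (Fin t → X)), Gv (mproj X t y) = Gv v := by
    intro y hy; simp only [Set.mem_preimage, Set.mem_singleton_iff] at hy; rw [hy]
  rw [setIntegral_congr_fun (hmeasv v (by assumption)) hconst, setIntegral_const, smul_eq_mul, Measure.real]
  by_cases h0 : μ (mproj X t ⁻¹' ({v} : Set (Fin t → X))) = 0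
  · rw [h0]
    have : μ.restrict (mproj X t ⁻¹' ({v} : Set (Fin t → X))) = 0 :=
      Measure.restrict_eq_zero.2 h0
    simp [this]
  · rw [hGv]
    have hne : (μ (mproj X t ⁻¹' ({v} : Set (Fin t → X)))).toReal ≠ 0 :=
      ENNReal.toReal_ne_zero.2 ⟨h0, measure_ne_top μ _⟩
    field_simp

lemma levy_cylAvg (μ : Measure (ℕ → X)) [IsProbabilityMeasure μ] {g : (ℕ → X) → ℝ}
    (hg : Integrable g μ) (hgm : StronglyMeasurable g) :
    ∀ᵐ x ∂μ, Tendsto (fun t => cylAvg μ g t x) atTop (𝓝 (g x)) := by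
  have hmeas : StronglyMeasurable[⨆ n, cylFilt X n] g := by
    rw [iSup_cylFilt]; exact hgm
  filter_upwards [hg.tendsto_ae_condExp hmeas,
    ae_all_iff.2 fun t => condexp_cylAvg μ hg t] with x h1 h2
  exact h1.congr fun t => (h2 t).symm

end CondExp

section Ratio

variable {X : Type*} [Fintype X] [Nonempty X] [MeasurableSpace X] [MeasurableSingletonClass X]

/-- The likelihood ratio of `ν` to `ξ` on the cylinder of `x` of length `t`. -/
noncomputable def rat (ν ξ : Measure (ℕ → X)) (t : ℕ) (x : ℕ → X) : ℝ :=
  (ν (cyl x t)).toReal / (ξ (cyl x t)).toReal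

/-- The Radon–Nikodym density of `ν` with respect to `ξ`, as a real-valued function. -/
noncomputable def fden (ν ξ : Measure (ℕ → X)) (x : ℕ → X) : ℝ := (ν.rnDeriv ξ x).toReal

lemma fden_integrable (ν ξ : Measure (ℕ → X)) [IsFiniteMeasure ν] : Integrable (fden ν ξ) ξ :=
  Measure.integrable_toReal_rnDeriv

lemma fden_measurable (ν ξ : Measure (ℕ → X)) : Measurable (fden ν ξ) :=
  (Measure.measurable_rnDeriv ν ξ).ennreal_toReal

lemma rat_eq_cylAvg {ν ξ : Measure (ℕ → X)} [IsProbabilityMeasure ν] [IsProbabilityMeasure ξ]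
    (hνξ : ν ≪ ξ) (t : ℕ) (x : ℕ → X) : rat ν ξ t x = cylAvg ξ (fden ν ξ) t x := by
  rw [rat, cylAvg]
  congr 1
  exact (Measure.setIntegral_toReal_rnDeriv hνξ (cyl x t)).symm

lemma rat_comp_mproj (ν ξ : Measure (ℕ → X)) (t : ℕ) :
    ∃ R : (Fin t → X) → ℝ, ∀ x, rat ν ξ t x = R (mproj X t x) := by
  refine ⟨fun v => (ν (mproj X t ⁻¹' {v})).toReal / (ξ (mproj X t ⁻¹' {v})).toReal, fun x => ?_⟩
  rw [rat, cyl_eq]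

lemma rat_tendsto {ν ξ : Measure (ℕ → X)} [IsProbabilityMeasure ν] [IsProbabilityMeasure ξ]
    (hνξ : ν ≪ ξ) :
    ∀ᵐ x ∂ξ, Tendsto (fun t => rat ν ξ t x) atTop (𝓝 (fden ν ξ x)) := by
  filter_upwards [levy_cylAvg ξ (fden_integrable ν ξ) (fden_measurable ν ξ).stronglyMeasurable]
    with x hx
  exact hx.congr fun t => (rat_eq_cylAvg hνξ t x).symm

/-- Conditional average absolute deviation of the density from its current cylinder average. -/
noncomputable def Adev (ν ξ : Measure (ℕ → X)) (t : ℕ) (x : ℕ → X) : ℝ :=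
  (∫ y in cyl x t, |fden ν ξ y - rat ν ξ t x| ∂ξ) / (ξ (cyl x t)).toReal

lemma Adev_nonneg (ν ξ : Measure (ℕ → X)) (t : ℕ) (x : ℕ → X) : 0 ≤ Adev ν ξ t x :=
  div_nonneg (integral_nonneg fun y => abs_nonneg _) ENNReal.toReal_nonneg

lemma hdev_integrable (ν ξ : Measure (ℕ → X)) [IsProbabilityMeasure ν] [IsProbabilityMeasure ξ]
    (s : ℕ) : Integrable (fun y => |fden ν ξ y - rat ν ξ s y|) ξ := by
  obtain ⟨R, hR⟩ := rat_comp_mproj ν ξ (X := X) s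
  have : Integrable (fun y => rat ν ξ s y) ξ := by
    have := integrable_comp_mproj ξ R
    exact this.congr (Eventually.of_forall fun y => (hR y).symm)
  exact ((fden_integrable ν ξ).sub this).abs

lemma hdev_measurable (ν ξ : Measure (ℕ → X)) (s : ℕ) :
    Measurable (fun y => |fden ν ξ y - rat ν ξ s y|) := by
  obtain ⟨R, hR⟩ := rat_comp_mproj ν ξ (X := X) s
  have h1 : Measurable (fun y => rat ν ξ s y) := by
    have heq : (fun y => rat ν ξ s y) = fun y => R (mproj X s y) := funext hR
    rw [heq]
    exact (measurable_of_finite R).comp (measurable_mproj s)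
  exact ((fden_measurable ν ξ).sub h1).abs

lemma Adev_bound {ν ξ : Measure (ℕ → X)} [IsProbabilityMeasure ν] [IsProbabilityMeasure ξ]
    {s t : ℕ} (hst : s ≤ t) (x : ℕ → X) :
    Adev ν ξ t x ≤ cylAvg ξ (fun y => |fden ν ξ y - rat ν ξ s y|) t x
      + |rat ν ξ s x - rat ν ξ t x| := by
  by_cases hz : (ξ (cyl x t)).toReal = 0
  · rw [Adev, hz, div_zero, cylAvg, hz, div_zero]
    positivity
  · have hzpos : 0 < (ξ (cyl x t)).toReal := lt_of_le_of_ne ENNReal.toReal_nonneg (Ne.symm hz)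
    have hpt : ∀ y ∈ cyl x t, |fden ν ξ y - rat ν ξ t x|
        ≤ |fden ν ξ y - rat ν ξ s y| + |rat ν ξ s x - rat ν ξ t x| := by
      intro y hy
      have hr : rat ν ξ s y = rat ν ξ s x := by rw [rat, rat, cyl_congr hy hst]
      calc |fden ν ξ y - rat ν ξ t x|
          = |(fden ν ξ y - rat ν ξ s y) + (rat ν ξ s x - rat ν ξ t x)| := by
            rw [hr]; ring_nf
        _ ≤ _ := abs_add_le _ _
    have hintL : IntegrableOn (fun y => |fden ν ξ y - rat ν ξ t x|) (cyl x t) ξ :=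
      (((fden_integrable ν ξ).sub (integrable_const _)).abs).integrableOn
    have hintR : IntegrableOn
        (fun y => |fden ν ξ y - rat ν ξ s y| + |rat ν ξ s x - rat ν ξ t x|) (cyl x t) ξ :=
      ((hdev_integrable ν ξ s).add (integrable_const _)).integrableOn
    have hint : ∫ y in cyl x t, |fden ν ξ y - rat ν ξ t x| ∂ξ
        ≤ ∫ y in cyl x t, (|fden ν ξ y - rat ν ξ s y| + |rat ν ξ s x - rat ν ξ t x|) ∂ξ :=
      setIntegral_mono_on hintL hintR (measurableSet_cyl x t) hpt
    have hsum : ∫ y in cyl x t, (|fden ν ξ y - rat ν ξ s y| + |rat ν ξ s x - rat ν ξ t x|) ∂ξ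
        = (∫ y in cyl x t, |fden ν ξ y - rat ν ξ s y| ∂ξ)
          + |rat ν ξ s x - rat ν ξ t x| * (ξ (cyl x t)).toReal := by
      rw [integral_add (hdev_integrable ν ξ s).integrableOn (integrable_const _).integrableOn,
        setIntegral_const, smul_eq_mul, mul_comm]
      rfl
    rw [Adev, cylAvg]
    rw [div_le_iff₀ hzpos]
    calc ∫ y in cyl x t, |fden ν ξ y - rat ν ξ t x| ∂ξ
        ≤ (∫ y in cyl x t, |fden ν ξ y - rat ν ξ s y| ∂ξ)
          + |rat ν ξ s x - rat ν ξ t x| * (ξ (cyl x t)).toReal := hint.trans_eq hsum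
      _ = ((∫ y in cyl x t, |fden ν ξ y - rat ν ξ s y| ∂ξ) / (ξ (cyl x t)).toReal
          + |rat ν ξ s x - rat ν ξ t x|) * (ξ (cyl x t)).toReal := by
            field_simp

lemma Adev_tendsto {ν ξ : Measure (ℕ → X)} [IsProbabilityMeasure ν] [IsProbabilityMeasure ξ]
    (hνξ : ν ≪ ξ) :
    ∀ᵐ x ∂ξ, Tendsto (fun t => Adev ν ξ t x) atTop (𝓝 0) := by
  filter_upwards [ae_all_iff.2 fun s =>
      levy_cylAvg ξ (hdev_integrable ν ξ s) (hdev_measurable ν ξ s).stronglyMeasurable,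
    rat_tendsto hνξ] with x hA hR
  rw [Metric.tendsto_atTop]
  intro ε hε
  obtain ⟨s, hs⟩ : ∃ s, |rat ν ξ s x - fden ν ξ x| < ε/4 := by
    obtain ⟨N, hN⟩ := (Metric.tendsto_atTop.1 hR) (ε/4) (by linarith)
    exact ⟨N, by simpa [Real.dist_eq] using hN N le_rfl⟩
  have hx0 : |fden ν ξ x - rat ν ξ s x| < ε/4 := by rw [abs_sub_comm]; exact hs
  have h1 : ∀ᶠ t in atTop,
      cylAvg ξ (fun y => |fden ν ξ y - rat ν ξ s y|) t x < ε/2 := by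
    have : |fden ν ξ x - rat ν ξ s x| < ε/2 := by linarith
    exact (hA s).eventually_lt_const this
  have h2 : ∀ᶠ t in atTop, |rat ν ξ t x - fden ν ξ x| < ε/4 := by
    have := (Metric.tendsto_atTop.1 hR) (ε/4) (by linarith)
    obtain ⟨N, hN⟩ := this
    exact eventually_atTop.2 ⟨N, fun t ht => by simpa [Real.dist_eq] using hN t ht⟩
  obtain ⟨N, hN⟩ := eventually_atTop.1 ((h1.and h2).and (eventually_ge_atTop s))
  refine ⟨N, fun t ht => ?_⟩
  obtain ⟨⟨h1t, h2t⟩, hts⟩ := hN t ht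
  have hb := Adev_bound (ν := ν) (ξ := ξ) hts x
  have hc : |rat ν ξ s x - rat ν ξ t x| < ε/2 := by
    calc |rat ν ξ s x - rat ν ξ t x|
        ≤ |rat ν ξ s x - fden ν ξ x| + |fden ν ξ x - rat ν ξ t x| := abs_sub_le _ _ _
      _ < ε/4 + ε/4 := by rw [abs_sub_comm (fden ν ξ x)]; exact add_lt_add hs h2t
      _ = ε/2 := by ring
  rw [Real.dist_eq, sub_zero, abs_of_nonneg (Adev_nonneg ν ξ t x)]
  linarith

end Ratio

section Key

variable {X : Type*} [Fintype X] [Nonempty X] [MeasurableSpace X] [MeasurableSingletonClass X]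

lemma condProb_eq {P ξ : Measure (ℕ → X)} [IsProbabilityMeasure P] [IsProbabilityMeasure ξ]
    (hP : P ≪ ξ) (x : ℕ → X) (t k : ℕ) (E : Set (Fin k → X)) :
    condProb P x t k E =
      (∫ y in {y | y ∈ cyl x t ∧ (fun j : Fin k => y (t + j)) ∈ E}, fden P ξ y ∂ξ)
        / (P (cyl x t)).toReal := by
  rw [condProb, prefProb]
  congr 1
  exact (Measure.setIntegral_toReal_rnDeriv hP _).symm

lemma dk_le_bound {ξ P Q' : Measure (ℕ → X)} [IsProbabilityMeasure ξ] [IsProbabilityMeasure P]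
    [IsProbabilityMeasure Q'] (hP : P ≪ ξ) (hQ : Q' ≪ ξ) (x : ℕ → X) (t : ℕ)
    (hz : 0 < (ξ (cyl x t)).toReal) (hr : 0 < rat P ξ t x) (hs : 0 < rat Q' ξ t x) (k : ℕ) :
    dk P Q' x t k ≤ Adev P ξ t x / rat P ξ t x + Adev Q' ξ t x / rat Q' ξ t x := by
  apply ciSup_le
  intro E
  set S := {y | y ∈ cyl x t ∧ (fun j : Fin k => y (t + j)) ∈ E} with hSdef
  have hSm : MeasurableSet S := by
    have h1 : Measurable fun (y : ℕ → X) (j : Fin k) => y (t + j) :=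
      measurable_pi_lambda _ fun j => measurable_pi_apply _
    have h2 : S = cyl x t ∩ (fun (y : ℕ → X) (j : Fin k) => y (t + j)) ⁻¹' E := rfl
    rw [h2]
    exact (measurableSet_cyl x t).inter (h1 (measurableSet_fin E))
  have hSsub : S ⊆ cyl x t := fun y hy => hy.1
  set z := (ξ (cyl x t)).toReal with hzdef
  set r := rat P ξ t x with hrdef
  set s := rat Q' ξ t x with hsdef
  have hpz : (P (cyl x t)).toReal = r * z := by
    rw [hrdef, rat, div_mul_cancel₀ _ hz.ne']
  have hqz : (Q' (cyl x t)).toReal = s * z := by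
    rw [hsdef, rat, div_mul_cancel₀ _ hz.ne']
  have hintP : IntegrableOn (fun y => fden P ξ y / r) S ξ :=
    ((fden_integrable P ξ).div_const r).integrableOn
  have hintQ : IntegrableOn (fun y => fden Q' ξ y / s) S ξ :=
    ((fden_integrable Q' ξ).div_const s).integrableOn
  have hdiff : condProb P x t k E - condProb Q' x t k E
      = (∫ y in S, (fden P ξ y / r - fden Q' ξ y / s) ∂ξ) / z := by
    rw [condProb_eq hP x t k E, condProb_eq hQ x t k E, hpz, hqz,
      integral_sub hintP hintQ, integral_div, integral_div]
    field_simp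
    ring
  -- pointwise bound on the integrand
  have hgbound : ∀ y, |fden P ξ y / r - fden Q' ξ y / s|
      ≤ |fden P ξ y - r| / r + |fden Q' ξ y - s| / s := by
    intro y
    have h1 : fden P ξ y / r - fden Q' ξ y / s
        = (fden P ξ y - r) / r - (fden Q' ξ y - s) / s := by
      field_simp
      ring
    rw [h1, ← abs_of_pos hr, ← abs_of_pos hs, ← abs_div, ← abs_div,
      abs_of_pos hr, abs_of_pos hs]
    exact abs_sub _ _
  have hint1 : IntegrableOn (fun y => |fden P ξ y / r - fden Q' ξ y / s|) (cyl x t) ξ :=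
    (((fden_integrable P ξ).div_const r).sub ((fden_integrable Q' ξ).div_const s)).abs.integrableOn
  have hIP : Integrable (fun y => |fden P ξ y - r| / r) ξ :=
    ((fden_integrable P ξ).sub (integrable_const r)).abs.div_const r
  have hIQ : Integrable (fun y => |fden Q' ξ y - s| / s) ξ :=
    ((fden_integrable Q' ξ).sub (integrable_const s)).abs.div_const s
  have hint2 : IntegrableOn (fun y => |fden P ξ y - r| / r + |fden Q' ξ y - s| / s)
      (cyl x t) ξ :=
    (hIP.add hIQ).integrableOn
  have habs : |∫ y in S, (fden P ξ y / r - fden Q' ξ y / s) ∂ξ|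
      ≤ ∫ y in cyl x t, (|fden P ξ y - r| / r + |fden Q' ξ y - s| / s) ∂ξ := by
    calc |∫ y in S, (fden P ξ y / r - fden Q' ξ y / s) ∂ξ|
        ≤ ∫ y in S, |fden P ξ y / r - fden Q' ξ y / s| ∂ξ := by
          simpa [Real.norm_eq_abs] using
            norm_integral_le_integral_norm (μ := ξ.restrict S)
              (fun y => fden P ξ y / r - fden Q' ξ y / s)
      _ ≤ ∫ y in cyl x t, |fden P ξ y / r - fden Q' ξ y / s| ∂ξ :=
          setIntegral_mono_set hint1
            (Eventually.of_forall fun y => abs_nonneg _)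
            (HasSubset.Subset.eventuallyLE hSsub)
      _ ≤ ∫ y in cyl x t, (|fden P ξ y - r| / r + |fden Q' ξ y - s| / s) ∂ξ :=
          setIntegral_mono_on hint1 hint2 (measurableSet_cyl x t) fun y _ => hgbound y
  have hsplit : ∫ y in cyl x t, (|fden P ξ y - r| / r + |fden Q' ξ y - s| / s) ∂ξ
      = (Adev P ξ t x * z) / r + (Adev Q' ξ t x * z) / s := by
    rw [integral_add hIP.integrableOn hIQ.integrableOn, integral_div, integral_div]
    congr 2
    · rw [Adev, div_mul_cancel₀ _ hz.ne']
    · rw [Adev, div_mul_cancel₀ _ hz.ne']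
  rw [hdiff, abs_div, abs_of_pos hz, div_le_iff₀ hz]
  calc |∫ y in S, (fden P ξ y / r - fden Q' ξ y / s) ∂ξ|
      ≤ (Adev P ξ t x * z) / r + (Adev Q' ξ t x * z) / s := habs.trans_eq hsplit
    _ = (Adev P ξ t x / r + Adev Q' ξ t x / s) * z := by ring

lemma ae_cyl_pos (P : Measure (ℕ → X)) [IsProbabilityMeasure P] :
    ∀ᵐ x ∂P, ∀ t, P (cyl x t) ≠ 0 := by
  rw [ae_all_iff]
  intro t
  rw [ae_iff]
  have hsub : {x | ¬ P (cyl x t) ≠ 0}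
      ⊆ ⋃ (v : Fin t → X) (_ : P (mproj X t ⁻¹' {v}) = 0), mproj X t ⁻¹' {v} := by
    intro x hx
    simp only [Set.mem_setOf_eq, not_not] at hx
    rw [cyl_eq] at hx
    exact Set.mem_iUnion.2 ⟨mproj X t x, Set.mem_iUnion.2 ⟨hx, rfl⟩⟩
  refine measure_mono_null hsub (measure_iUnion_null fun v => ?_)
  by_cases hv : P (mproj X t ⁻¹' {v}) = 0 <;> simp [hv]

end Key

/-- With probability 1 over sequences sampled from the true measure `P = Q i₀ ∈ ℳ`: for every
`Q ∈ ℳ` whose posterior weight satisfies `limsup_t w(Q | x_{<t}) > 0`, the conditional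
measures of `Q` merge with those of `P` in total variation. -/
theorem positive_limsup_implies_merging
    {X : Type*} [Fintype X] [Nonempty X] [MeasurableSpace X] [MeasurableSingletonClass X]
    {ι : Type*} [Countable ι]
    (Q : ι → Measure (ℕ → X)) (hQ : ∀ i, IsProbabilityMeasure (Q i))
    (w : ι → ℝ) (hw : ∀ i, 0 < w i) (hw1 : ∑' i, w i = 1)
    (i₀ : ι) :
    ∀ᵐ x ∂(Q i₀), ∀ i : ι,
      0 < Filter.limsup (fun t => post w Q i x t) atTop →
      Tendsto (fun t => dTV (Q i₀) (Q i) x t) atTop (nhds 0) := by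
  haveI := hQ
  have hsummable : Summable w := by
    by_contra h
    rw [tsum_eq_zero_of_not_summable h] at hw1
    norm_num at hw1
  set κ : ι → ENNReal := fun j => ENNReal.ofReal (w j) with hκdef
  set ξ : Measure (ℕ → X) := Measure.sum (fun j => κ j • Q j) with hξdef
  have hκ1 : ∑' j, κ j = 1 := by
    rw [hκdef, ← ENNReal.ofReal_tsum_of_nonneg (fun i => (hw i).le) hsummable, hw1,
      ENNReal.ofReal_one]
  haveI hξP : IsProbabilityMeasure ξ := by
    constructor
    rw [hξdef, Measure.sum_apply _ MeasurableSet.univ]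
    simp only [Measure.smul_apply, smul_eq_mul]
    calc ∑' j, κ j * Q j Set.univ = ∑' j, κ j := by
          exact tsum_congr fun j => by rw [measure_univ, mul_one]
      _ = 1 := hκ1
  have hac : ∀ i, Q i ≪ ξ := by
    intro i
    refine Measure.AbsolutelyContinuous.mk fun sset hsm hs0 => ?_
    have hle : (κ i • Q i) sset ≤ ξ sset := by
      rw [hξdef]
      exact Measure.le_iff'.1 (Measure.le_sum (fun j => κ j • Q j) i) sset
    rw [hs0] at hle
    have hzero : κ i * Q i sset = 0 :=
      le_antisymm (by simpa [Measure.smul_apply] using hle) zero_le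
    have hκi : κ i ≠ 0 := by simp [hκdef, ENNReal.ofReal_eq_zero, not_le, hw i]
    exact (mul_eq_zero.1 hzero).resolve_left hκi
  have hden : ∀ (x : ℕ → X) t, (∑' j, w j * prefProb (Q j) x t) = (ξ (cyl x t)).toReal := by
    intro x t
    have hsum : ξ (cyl x t) = ∑' j, κ j * Q j (cyl x t) := by
      rw [hξdef, Measure.sum_apply _ (measurableSet_cyl x t)]
      simp only [Measure.smul_apply, smul_eq_mul]
    rw [hsum, ENNReal.tsum_toReal_eq
      (fun j => ENNReal.mul_ne_top ENNReal.ofReal_ne_top (measure_ne_top _ _))]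
    refine tsum_congr fun j => ?_
    rw [ENNReal.toReal_mul, ENNReal.toReal_ofReal (hw j).le]
    rfl
  have haeP : ae (Q i₀) ≤ ae ξ := (hac i₀).ae_le
  have hfpos : ∀ᵐ x ∂(Q i₀), 0 < fden (Q i₀) ξ x := by
    filter_upwards [Measure.rnDeriv_pos (hac i₀), haeP (Measure.rnDeriv_ne_top (Q i₀) ξ)]
      with x h1 h2
    exact ENNReal.toReal_pos h1.ne' h2
  have hMten : ∀ᵐ x ∂(Q i₀), ∀ i,
      Tendsto (fun t => rat (Q i) ξ t x) atTop (𝓝 (fden (Q i) ξ x)) :=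
    haeP (ae_all_iff.2 fun i => rat_tendsto (hac i))
  have hAten : ∀ᵐ x ∂(Q i₀), ∀ i, Tendsto (fun t => Adev (Q i) ξ t x) atTop (𝓝 0) :=
    haeP (ae_all_iff.2 fun i => Adev_tendsto (hac i))
  filter_upwards [ae_cyl_pos (Q i₀), hfpos, hMten, hAten] with x h0 hf0 hM hA
  intro i hlim
  have hz : ∀ t, 0 < (ξ (cyl x t)).toReal := by
    intro t
    refine ENNReal.toReal_pos (fun hzero => h0 t ((hac i₀) hzero)) (measure_ne_top _ _)
  have hpost : ∀ t, post w Q i x t = w i * rat (Q i) ξ t x := by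
    intro t
    rw [post, hden x t, rat, mul_div_assoc]
    rfl
  have hposttend : Tendsto (fun t => post w Q i x t) atTop (𝓝 (w i * fden (Q i) ξ x)) := by
    have := (hM i).const_mul (w i)
    exact this.congr fun t => (hpost t).symm
  rw [hposttend.limsup_eq] at hlim
  have hfi : 0 < fden (Q i) ξ x := by
    by_contra h
    push_neg at h
    nlinarith [hw i]
  have hrev : ∀ᶠ t in atTop, 0 < rat (Q i₀) ξ t x :=
    (hM i₀).eventually (eventually_gt_nhds hf0)
  have hsev : ∀ᶠ t in atTop, 0 < rat (Q i) ξ t x :=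
    (hM i).eventually (eventually_gt_nhds hfi)
  set D : ℕ → ℝ := fun t =>
    Adev (Q i₀) ξ t x / rat (Q i₀) ξ t x + Adev (Q i) ξ t x / rat (Q i) ξ t x with hD
  have hDten : Tendsto D atTop (𝓝 0) := by
    have h1 := (hA i₀).div (hM i₀) hf0.ne'
    have h2 := (hA i).div (hM i) hfi.ne'
    have h3 := h1.add h2
    simpa using h3
  have hbound : ∀ᶠ t in atTop, dTV (Q i₀) (Q i) x t ≤ D t := by
    filter_upwards [hrev, hsev] with t hrt hst
    exact ciSup_le fun k => dk_le_bound (hac i₀) (hac i) x t (hz t) hrt hst k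
  have hnn : ∀ t, 0 ≤ dTV (Q i₀) (Q i) x t := fun t =>
    Real.iSup_nonneg fun k => Real.iSup_nonneg fun E => abs_nonneg _
  exact tendsto_of_tendsto_of_tendsto_of_le_of_le' tendsto_const_nhds hDten
    (Eventually.of_forall hnn) hbound
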